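/- Let t(i,j) = C(i,j) (Pascal's triangle) and let h be the tetrahedron built from t. Then for all 0 ≤ k ≤ i and 0 ≤ j ≤ i-k, h(i,j,k) = Σ_{ℓ=0}^{k} C(2ℓ+i-k, ℓ+j) · C(k,ℓ). -/

import Mathlib

/-- The tetrahedron built from Pascal's triangle. -/
def HP : ℕ → ℕ → ℕ → ℕ
  | i, j, 0 => i.choose j
  | i, j, k + 1 => HP (i - 1) j k + HP i j k + HP i (j + 1) k

theorem stmt_10 (i j k : ℕ) (hk : k ≤ i) (hj : j ≤ i - k) :
    HP i j k = ∑ ℓ ∈ Finset.range (k + 1), (2 * ℓ + i - k).choose (ℓ + j) * k.choose ℓ := by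
  induction k generalizing i j with
  | zero => simp [HP]
  | succ k ih =>
    obtain ⟨m, rfl⟩ : ∃ m, i = m + k + 1 := ⟨i - (k + 1), by omega⟩
    have hi1 : m + k + 1 - 1 = m + k := by omega
    have e1 : HP (m + k) j k =
        ∑ ℓ ∈ Finset.range (k + 1), (2 * ℓ + m).choose (ℓ + j) * k.choose ℓ := by
      rw [ih (m + k) j (by omega) (by omega)]
      refine Finset.sum_congr rfl fun ℓ _ => by rw [show 2 * ℓ + (m + k) - k = 2 * ℓ + m from by omega]
    have e2 : HP (m + k + 1) j k =
        ∑ ℓ ∈ Finset.range (k + 1), (2 * ℓ + m + 1).choose (ℓ + j) * k.choose ℓ := by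
      rw [ih (m + k + 1) j (by omega) (by omega)]
      refine Finset.sum_congr rfl fun ℓ _ => by
        rw [show 2 * ℓ + (m + k + 1) - k = 2 * ℓ + m + 1 from by omega]
    have e3 : HP (m + k + 1) (j + 1) k =
        ∑ ℓ ∈ Finset.range (k + 1), (2 * ℓ + m + 1).choose (ℓ + j + 1) * k.choose ℓ := by
      rw [ih (m + k + 1) (j + 1) (by omega) (by omega)]
      refine Finset.sum_congr rfl fun ℓ _ => by congr 2; omega
    have eR : ∑ ℓ ∈ Finset.range (k + 1 + 1),
          (2 * ℓ + (m + k + 1) - (k + 1)).choose (ℓ + j) * (k + 1).choose ℓ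
        = ∑ ℓ ∈ Finset.range (k + 1 + 1), (2 * ℓ + m).choose (ℓ + j) * (k + 1).choose ℓ := by
      refine Finset.sum_congr rfl fun ℓ _ => by congr 2; omega
    show HP (m + k + 1 - 1) j k + HP (m + k + 1) j k + HP (m + k + 1) (j + 1) k = _
    rw [hi1, e1, e2, e3, eR]
    rw [Finset.sum_range_succ' (fun ℓ => (2 * ℓ + m).choose (ℓ + j) * (k + 1).choose ℓ) (k + 1)]
    rw [Finset.sum_range_succ' (fun ℓ => (2 * ℓ + m).choose (ℓ + j) * k.choose ℓ) k]
    have key : ∀ ℓ : ℕ, (2 * (ℓ + 1) + m).choose (ℓ + 1 + j) * (k + 1).choose (ℓ + 1)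
        = (2 * (ℓ + 1) + m).choose (ℓ + 1 + j) * k.choose (ℓ + 1)
          + ((2 * ℓ + m + 1).choose (ℓ + j) * k.choose ℓ
            + (2 * ℓ + m + 1).choose (ℓ + j + 1) * k.choose ℓ) := by
      intro ℓ
      have h1 : (k + 1).choose (ℓ + 1) = k.choose ℓ + k.choose (ℓ + 1) :=
        Nat.choose_succ_succ k ℓ
      have h2 : (2 * (ℓ + 1) + m).choose (ℓ + 1 + j)
          = (2 * ℓ + m + 1).choose (ℓ + j) + (2 * ℓ + m + 1).choose (ℓ + j + 1) := by
        have : 2 * (ℓ + 1) + m = (2 * ℓ + m + 1) + 1 := by ring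
        rw [this, show ℓ + 1 + j = (ℓ + j) + 1 from by ring, Nat.choose_succ_succ]
      rw [h1, h2]; ring
    simp only [key]
    rw [Finset.sum_add_distrib, Finset.sum_add_distrib,
      Finset.sum_range_succ (fun x => (2 * (x + 1) + m).choose (x + 1 + j) * k.choose (x + 1)) k]
    simp [Nat.choose_succ_self]
    omega
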